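/- The function G(z) = 1 − e^{-2z²} − √π z e^{-z²}(2Φ(√2 z) − 1) for z ≥ 0 (and G(z)=0 for z<0) is a probability distribution function: it is nondecreasing, G(0) = 0, and G(z) → 1 as z → ∞. -/

import Mathlib

open MeasureTheory Set Filter

/-- The standard normal cumulative distribution function. -/
noncomputable def stdNormalCDF (t : ℝ) : ℝ :=
  (Real.sqrt (2 * Real.pi))⁻¹ * ∫ y in Iic t, Real.exp (-y ^ 2 / 2)

/-- The convolution of `1 - exp (-2 z²)` with itself, extended by `0` for `z < 0`. -/
noncomputable def Gconv (z : ℝ) : ℝ :=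
  if z < 0 then 0
  else 1 - Real.exp (-2 * z ^ 2)
    - Real.sqrt Real.pi * z * Real.exp (-z ^ 2) * (2 * stdNormalCDF (Real.sqrt 2 * z) - 1)

lemma gauss_int : Integrable (fun y : ℝ => Real.exp (-y ^ 2 / 2)) := by
  have := integrable_exp_neg_mul_sq (by norm_num : (0:ℝ) < 1/2)
  convert this using 2 with y
  ring_nf

lemma gauss_total : ∫ y : ℝ, Real.exp (-y ^ 2 / 2) = Real.sqrt (2 * Real.pi) := by
  have := integral_gaussian (1/2)
  rw [show Real.pi / (1/2) = 2 * Real.pi by ring] at this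
  rw [← this]
  congr 1 with y
  ring_nf

lemma gauss_half : ∫ y in Iic (0:ℝ), Real.exp (-y ^ 2 / 2) = Real.sqrt (2 * Real.pi) / 2 := by
  have hsymm : ∫ y in Iic (0:ℝ), Real.exp (-y ^ 2 / 2) = ∫ y in Ioi (0:ℝ), Real.exp (-y ^ 2 / 2) := by
    rw [show (0:ℝ) = -(0:ℝ) by norm_num, ← integral_comp_neg_Iic]
    norm_num
  have hsplit := intervalIntegral.integral_Iic_add_Ioi (b := (0:ℝ))
    gauss_int.integrableOn gauss_int.integrableOn
  rw [gauss_total] at hsplit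
  linarith [hsymm, hsplit]

lemma sqrt2pi_pos : 0 < Real.sqrt (2 * Real.pi) := Real.sqrt_pos.2 (by positivity)

lemma stdNormalCDF_zero : stdNormalCDF 0 = 1/2 := by
  rw [stdNormalCDF, gauss_half]
  field_simp

lemma stdNormalCDF_mono : Monotone stdNormalCDF := by
  intro s t hst
  unfold stdNormalCDF
  refine mul_le_mul_of_nonneg_left ?_ (le_of_lt (inv_pos.2 sqrt2pi_pos))
  exact setIntegral_mono_set gauss_int.integrableOn
    (Eventually.of_forall fun y => (Real.exp_pos _).le)
    (Eventually.of_forall (Iic_subset_Iic.2 hst))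

lemma stdNormalCDF_le_one (t : ℝ) : stdNormalCDF t ≤ 1 := by
  rw [stdNormalCDF, inv_mul_le_iff₀ sqrt2pi_pos, mul_one, ← gauss_total]
  exact setIntegral_le_integral gauss_int (Eventually.of_forall fun y => (Real.exp_pos _).le)

lemma stdNormalCDF_nonneg (t : ℝ) : 0 ≤ stdNormalCDF t := by
  rw [stdNormalCDF]
  refine mul_nonneg (le_of_lt (inv_pos.2 sqrt2pi_pos)) ?_
  exact setIntegral_nonneg measurableSet_Iic fun y _ => (Real.exp_pos _).le

lemma stdNormalCDF_sub_zero (t : ℝ) (ht : 0 ≤ t) :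
    stdNormalCDF t - 1/2 ≤ (Real.sqrt (2 * Real.pi))⁻¹ * t := by
  rw [← stdNormalCDF_zero, stdNormalCDF, stdNormalCDF, ← mul_sub]
  rw [intervalIntegral.integral_Iic_sub_Iic gauss_int.integrableOn gauss_int.integrableOn]
  refine mul_le_mul_of_nonneg_left ?_ (le_of_lt (inv_pos.2 sqrt2pi_pos))
  calc ∫ y in (0:ℝ)..t, Real.exp (-y ^ 2 / 2) ≤ ∫ _ in (0:ℝ)..t, (1:ℝ) := by
        apply intervalIntegral.integral_mono_on ht gauss_int.intervalIntegrable
          intervalIntegrable_const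
        intro x _
        rw [← Real.exp_zero]
        apply Real.exp_le_exp.2
        nlinarith
    _ = t := by simp

lemma hasDerivAt_stdNormalCDF (t : ℝ) :
    HasDerivAt stdNormalCDF ((Real.sqrt (2 * Real.pi))⁻¹ * Real.exp (-t ^ 2 / 2)) t := by
  have key : ∀ u : ℝ, stdNormalCDF u = (Real.sqrt (2 * Real.pi))⁻¹ *
      ((∫ y in Iic (0:ℝ), Real.exp (-y ^ 2 / 2)) + ∫ y in (0:ℝ)..u, Real.exp (-y ^ 2 / 2)) := by
    intro u
    rw [stdNormalCDF, ← intervalIntegral.integral_Iic_sub_Iic gauss_int.integrableOn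
      gauss_int.integrableOn]
    ring
  have hd : HasDerivAt (fun u => ∫ y in (0:ℝ)..u, Real.exp (-y ^ 2 / 2))
      (Real.exp (-t ^ 2 / 2)) t := by
    exact intervalIntegral.integral_hasDerivAt_right gauss_int.intervalIntegrable
      (Real.continuous_exp.comp (by continuity)).stronglyMeasurable.stronglyMeasurableAtFilter
      (Real.continuous_exp.comp (by continuity)).continuousAt
  have := ((hd.const_add (∫ y in Iic (0:ℝ), Real.exp (-y ^ 2 / 2))).const_mul
    ((Real.sqrt (2 * Real.pi))⁻¹))
  refine HasDerivAt.congr_of_eventuallyEq ?_ (Eventually.of_forall key)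
  convert this using 1

noncomputable def gfun (z : ℝ) : ℝ :=
  1 - Real.exp (-2 * z ^ 2)
    - Real.sqrt Real.pi * z * Real.exp (-z ^ 2) * (2 * stdNormalCDF (Real.sqrt 2 * z) - 1)

lemma hasDerivAt_gfun (z : ℝ) : HasDerivAt gfun
    (2 * z * Real.exp (-2 * z ^ 2) -
      Real.sqrt Real.pi * (1 - 2 * z ^ 2) * Real.exp (-z ^ 2) *
        (2 * stdNormalCDF (Real.sqrt 2 * z) - 1)) z := by
  have h1 : HasDerivAt (fun z : ℝ => -2 * z ^ 2) (-4 * z) z := by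
    have := (hasDerivAt_pow 2 z).const_mul (-2 : ℝ)
    refine this.congr_deriv ?_
    push_cast
    ring
  have hA : HasDerivAt (fun z : ℝ => Real.exp (-2 * z ^ 2))
      (Real.exp (-2 * z ^ 2) * (-4 * z)) z := h1.exp
  have h2 : HasDerivAt (fun z : ℝ => -z ^ 2) (-2 * z) z := by
    simpa using ((hasDerivAt_pow 2 z).const_mul (-1 : ℝ))
  have hexp2 : HasDerivAt (fun z : ℝ => Real.exp (-z ^ 2))
      (Real.exp (-z ^ 2) * (-2 * z)) z := h2.exp
  have hB : HasDerivAt (fun z : ℝ => Real.sqrt Real.pi * z * Real.exp (-z ^ 2))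
      (Real.sqrt Real.pi * Real.exp (-z ^ 2) +
        Real.sqrt Real.pi * z * (Real.exp (-z ^ 2) * (-2 * z))) z := by
    have := ((hasDerivAt_id z).const_mul (Real.sqrt Real.pi)).mul hexp2
    refine this.congr_deriv ?_
    simp only [id_eq, mul_one]
  have hlin : HasDerivAt (fun z : ℝ => Real.sqrt 2 * z) (Real.sqrt 2) z := by
    simpa using (hasDerivAt_id z).const_mul (Real.sqrt 2)
  have hPhi : HasDerivAt (fun z : ℝ => stdNormalCDF (Real.sqrt 2 * z))
      ((Real.sqrt (2 * Real.pi))⁻¹ * Real.exp (-(Real.sqrt 2 * z) ^ 2 / 2) * Real.sqrt 2) z :=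
    (hasDerivAt_stdNormalCDF (Real.sqrt 2 * z)).comp z hlin
  have hE : HasDerivAt (fun z : ℝ => 2 * stdNormalCDF (Real.sqrt 2 * z) - 1)
      (2 * ((Real.sqrt (2 * Real.pi))⁻¹ * Real.exp (-(Real.sqrt 2 * z) ^ 2 / 2) * Real.sqrt 2)) z :=
    (hPhi.const_mul 2).sub_const 1
  have hg := ((hasDerivAt_const z (1:ℝ)).sub hA).sub (hB.mul hE)
  refine hg.congr_deriv ?_
  symm
  have e1 : -(Real.sqrt 2 * z) ^ 2 / 2 = -z ^ 2 := by
    rw [mul_pow, Real.sq_sqrt (by norm_num : (2:ℝ) ≥ 0)]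
    ring
  have e2 : Real.sqrt (2 * Real.pi) = Real.sqrt 2 * Real.sqrt Real.pi :=
    Real.sqrt_mul (by norm_num) _
  have e3 : Real.exp (-z ^ 2) * Real.exp (-z ^ 2) = Real.exp (-2 * z ^ 2) := by
    rw [← Real.exp_add]; ring_nf
  have h2pos : (0:ℝ) < Real.sqrt 2 := Real.sqrt_pos.2 (by norm_num)
  have hppos : (0:ℝ) < Real.sqrt Real.pi := Real.sqrt_pos.2 Real.pi_pos
  have e4 : Real.sqrt Real.pi * z * Real.exp (-z ^ 2) *
      (2 * ((Real.sqrt 2 * Real.sqrt Real.pi)⁻¹ * Real.exp (-z ^ 2) * Real.sqrt 2)) =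
      2 * z * Real.exp (-2 * z ^ 2) := by
    rw [← e3]
    field_simp
  rw [e1, e2]
  linear_combination e4

lemma deriv_gfun_nonneg {z : ℝ} (hz : 0 ≤ z) :
    0 ≤ 2 * z * Real.exp (-2 * z ^ 2) -
      Real.sqrt Real.pi * (1 - 2 * z ^ 2) * Real.exp (-z ^ 2) *
        (2 * stdNormalCDF (Real.sqrt 2 * z) - 1) := by
  set E := 2 * stdNormalCDF (Real.sqrt 2 * z) - 1 with hEdef
  have hppos : (0:ℝ) < Real.sqrt Real.pi := Real.sqrt_pos.2 Real.pi_pos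
  have h2pos : (0:ℝ) < Real.sqrt 2 := Real.sqrt_pos.2 (by norm_num)
  have hE0 : 0 ≤ E := by
    have := stdNormalCDF_mono (by positivity : (0:ℝ) ≤ Real.sqrt 2 * z)
    rw [stdNormalCDF_zero] at this
    simp [hEdef]; linarith
  have hEub : Real.sqrt Real.pi * E ≤ 2 * z := by
    have h := stdNormalCDF_sub_zero (Real.sqrt 2 * z) (by positivity)
    have e2 : Real.sqrt (2 * Real.pi) = Real.sqrt 2 * Real.sqrt Real.pi :=
      Real.sqrt_mul (by norm_num) _
    rw [e2] at h
    have key : (Real.sqrt 2 * Real.sqrt Real.pi)⁻¹ * (Real.sqrt 2 * z) = z / Real.sqrt Real.pi := by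
      field_simp
    rw [key] at h
    have : E ≤ 2 * (z / Real.sqrt Real.pi) := by rw [hEdef]; linarith
    calc Real.sqrt Real.pi * E ≤ Real.sqrt Real.pi * (2 * (z / Real.sqrt Real.pi)) := by
          exact mul_le_mul_of_nonneg_left this hppos.le
      _ = 2 * z := by field_simp
  have hexp1 : (0:ℝ) < Real.exp (-z ^ 2) := Real.exp_pos _
  have hexp2' : (0:ℝ) < Real.exp (-2 * z ^ 2) := Real.exp_pos _
  have he3 : Real.exp (-z ^ 2) * Real.exp (-z ^ 2) = Real.exp (-2 * z ^ 2) := by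
    rw [← Real.exp_add]; ring_nf
  rcases le_or_gt (1 - 2 * z ^ 2) 0 with hcase | hcase
  · have : Real.sqrt Real.pi * (1 - 2 * z ^ 2) * Real.exp (-z ^ 2) * E ≤ 0 := by
      apply mul_nonpos_of_nonpos_of_nonneg _ hE0
      exact mul_nonpos_of_nonpos_of_nonneg (mul_nonpos_of_nonneg_of_nonpos hppos.le hcase) hexp1.le
    nlinarith
  · have hbound : 1 - 2 * z ^ 2 ≤ Real.exp (-z ^ 2) := by
      have := Real.add_one_le_exp (-z ^ 2)
      nlinarith [sq_nonneg z]
    have step : Real.sqrt Real.pi * (1 - 2 * z ^ 2) * Real.exp (-z ^ 2) * E ≤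
        Real.exp (-z ^ 2) * Real.exp (-z ^ 2) * (2 * z) := by
      have h1 : Real.sqrt Real.pi * (1 - 2 * z ^ 2) * Real.exp (-z ^ 2) * E =
          ((1 - 2 * z ^ 2) * Real.exp (-z ^ 2)) * (Real.sqrt Real.pi * E) := by ring
      rw [h1]
      apply mul_le_mul (by nlinarith) hEub (by positivity) (by positivity)
    rw [he3] at step
    nlinarith

lemma tendsto_exp_neg_two_sq : Tendsto (fun z : ℝ => Real.exp (-2 * z ^ 2)) atTop (nhds 0) := by
  have h1 : Tendsto (fun z : ℝ => 2 * z ^ 2) atTop atTop :=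
    (tendsto_pow_atTop (by norm_num)).const_mul_atTop (by norm_num)
  have := (Real.tendsto_exp_neg_atTop_nhds_zero).comp h1
  convert this using 2 with z
  simp only [Function.comp]
  ring_nf

lemma tendsto_third : Tendsto (fun z : ℝ =>
    Real.sqrt Real.pi * z * Real.exp (-z ^ 2) * (2 * stdNormalCDF (Real.sqrt 2 * z) - 1))
    atTop (nhds 0) := by
  have hg : Tendsto (fun z : ℝ => Real.sqrt Real.pi * (z ^ 1 * Real.exp (-z))) atTop (nhds 0) := by
    have := (Real.tendsto_pow_mul_exp_neg_atTop_nhds_zero 1).const_mul (Real.sqrt Real.pi)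
    simpa using this
  apply squeeze_zero' ?_ ?_ hg
  · filter_upwards [eventually_ge_atTop (0:ℝ)] with z hz
    have hE0 : 0 ≤ 2 * stdNormalCDF (Real.sqrt 2 * z) - 1 := by
      have := stdNormalCDF_mono (by positivity : (0:ℝ) ≤ Real.sqrt 2 * z)
      rw [stdNormalCDF_zero] at this
      linarith
    positivity
  · filter_upwards [eventually_ge_atTop (1:ℝ)] with z hz
    have hE1 : 2 * stdNormalCDF (Real.sqrt 2 * z) - 1 ≤ 1 := by
      have := stdNormalCDF_le_one (Real.sqrt 2 * z)
      linarith
    have hE0 : 0 ≤ 2 * stdNormalCDF (Real.sqrt 2 * z) - 1 := by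
      have := stdNormalCDF_mono (by positivity : (0:ℝ) ≤ Real.sqrt 2 * z)
      rw [stdNormalCDF_zero] at this
      linarith
    have hee : Real.exp (-z ^ 2) ≤ Real.exp (-z) := by
      apply Real.exp_le_exp.2
      nlinarith
    have hz0 : (0:ℝ) ≤ z := by linarith
    have hppos : (0:ℝ) ≤ Real.sqrt Real.pi := Real.sqrt_nonneg _
    calc Real.sqrt Real.pi * z * Real.exp (-z ^ 2) * (2 * stdNormalCDF (Real.sqrt 2 * z) - 1)
        ≤ Real.sqrt Real.pi * z * Real.exp (-z ^ 2) * 1 := by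
          apply mul_le_mul_of_nonneg_left hE1 (by positivity)
      _ = Real.sqrt Real.pi * (z * Real.exp (-z ^ 2)) := by ring
      _ ≤ Real.sqrt Real.pi * (z ^ 1 * Real.exp (-z)) := by
          apply mul_le_mul_of_nonneg_left _ hppos
          simp only [pow_one]
          exact mul_le_mul_of_nonneg_left hee hz0

lemma gfun_tendsto : Tendsto gfun atTop (nhds 1) := by
  have := ((tendsto_const_nhds (x := (1:ℝ)) (f := atTop)).sub tendsto_exp_neg_two_sq).sub
    tendsto_third
  unfold gfun
  simpa using this

lemma gfun_zero : gfun 0 = 0 := by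
  simp [gfun]

lemma gfun_monoOn : MonotoneOn gfun (Ici 0) := by
  apply monotoneOn_of_deriv_nonneg (convex_Ici 0)
  · exact (Differentiable.continuous (fun z => (hasDerivAt_gfun z).differentiableAt)).continuousOn
  · exact Differentiable.differentiableOn (fun z => (hasDerivAt_gfun z).differentiableAt)
  · intro x hx
    rw [interior_Ici] at hx
    rw [(hasDerivAt_gfun x).deriv]
    exact deriv_gfun_nonneg (le_of_lt hx)

lemma Gconv_eq (z : ℝ) : Gconv z = if z < 0 then 0 else gfun z := rfl

theorem stmt_9 :
    Monotone Gconv ∧ Gconv 0 = 0 ∧ Tendsto Gconv atTop (nhds 1) := by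
  have hnonneg : ∀ z, 0 ≤ z → 0 ≤ gfun z := by
    intro z hz
    have := gfun_monoOn (self_mem_Ici) hz hz
    rwa [gfun_zero] at this
  refine ⟨?_, ?_, ?_⟩
  · intro x y hxy
    rw [Gconv_eq, Gconv_eq]
    by_cases hy : y < 0
    · rw [if_pos hy, if_pos (lt_of_le_of_lt hxy hy)]
    · rw [if_neg hy]
      push_neg at hy
      by_cases hx : x < 0
      · rw [if_pos hx]
        exact hnonneg y hy
      · push_neg at hx
        rw [if_neg (not_lt.2 hx)]
        exact gfun_monoOn hx hy hxy
  · rw [Gconv_eq, if_neg (lt_irrefl 0), gfun_zero]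
  · apply Tendsto.congr' _ gfun_tendsto
    filter_upwards [eventually_ge_atTop (0:ℝ)] with z hz
    rw [Gconv_eq, if_neg (not_lt.2 hz)]
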